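/- arXiv:1705.06627 — 3 statements merged into one kernel-verified Lean document; each statement's English description precedes it below -/
import Mathlib

section
/- Let n ≥ 2 and let −1 = k₀ < k₁ < … < k_{2n−1} = 1. Let q(ξ) = |∏_{j=0}^{2n−1}(ξ−k_j)|^{1/2} and define I_{mj} = ∫_{k_{2j}}^{k_{2j+1}} ξ^{m−1}/q(ξ) dξ for j = 1,…,n−1 and m = 1,…,n−1. Then the (n−1)×(n−1) matrix M with entries M_{mj} = (−1)^j I_{mj} is invertible. -/
open MeasureTheory Set Matrix

/-- `C * (x - a) ^ (-1/2)` is interval integrable on `a..b`. -/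
lemma helper_left_rpow (C a b : ℝ) :
    IntervalIntegrable (fun x => C * (x - a) ^ (-(1/2) : ℝ)) volume a b := by
  have h := (intervalIntegral.intervalIntegrable_rpow' (a := 0) (b := b - a)
    (r := -(1/2)) (by norm_num)).comp_sub_right a
  rw [zero_add, sub_add_cancel] at h
  exact h.const_mul C

/-- `C * (b - x) ^ (-1/2)` is interval integrable on `a..b`. -/
lemma helper_right_rpow (C a b : ℝ) :
    IntervalIntegrable (fun x => C * (b - x) ^ (-(1/2) : ℝ)) volume a b := by
  have h := (intervalIntegral.intervalIntegrable_rpow' (a := b - a) (b := 0)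
    (r := -(1/2)) (by norm_num)).comp_sub_left b
  rw [sub_sub_cancel, sub_zero] at h
  exact h.const_mul C

/-- domination on the open interval gives interval integrability. -/
lemma helper_integrable_of_bound {g h : ℝ → ℝ} (hg : Measurable g) {a b : ℝ} (hab : a ≤ b)
    (hh : IntervalIntegrable h volume a b)
    (hbound : ∀ ξ ∈ Set.Ioo a b, |g ξ| ≤ h ξ) : IntervalIntegrable g volume a b := by
  rw [intervalIntegrable_iff_integrableOn_Ioo_of_le hab] at hh ⊢
  refine hh.mono' hg.aestronglyMeasurable.restrict ?_
  refine ae_restrict_of_forall_mem measurableSet_Ioo fun ξ hξ => ?_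
  rw [Real.norm_eq_abs]
  exact hbound ξ hξ


/-- pointwise bound for a monomial over the square root of a product. -/
lemma helper_key_bound {L : ℕ} (c : Fin L → ℝ) (q : ℝ → ℝ)
    (hq : ∀ ξ, q ξ = Real.sqrt |∏ i : Fin L, (ξ - c i)|) (i₀ : Fin L) (d : Fin L → ℝ)
    (ξ : ℝ) (hξ : |ξ| ≤ 1) (hξ0 : ξ ≠ c i₀)
    (hd : ∀ i, i ≠ i₀ → 0 < d i ∧ d i ≤ |ξ - c i|) (mm : ℕ) :
    |ξ ^ mm / q ξ| ≤
      (Real.sqrt (∏ i ∈ Finset.univ.erase i₀, d i))⁻¹ * |ξ - c i₀| ^ (-(1/2) : ℝ) := by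
  classical
  set D : ℝ := ∏ i ∈ Finset.univ.erase i₀, d i with hD
  have hDpos : 0 < D := Finset.prod_pos fun i hi => (hd i (Finset.ne_of_mem_erase hi)).1
  have hprod : |ξ - c i₀| * D ≤ ∏ i : Fin L, |ξ - c i| := by
    rw [← Finset.mul_prod_erase Finset.univ (fun i => |ξ - c i|) (Finset.mem_univ i₀)]
    refine mul_le_mul_of_nonneg_left ?_ (abs_nonneg _)
    exact Finset.prod_le_prod (fun i hi => (hd i (Finset.ne_of_mem_erase hi)).1.le)
      (fun i hi => (hd i (Finset.ne_of_mem_erase hi)).2)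
  have habs : |∏ i : Fin L, (ξ - c i)| = ∏ i : Fin L, |ξ - c i| := Finset.abs_prod _ _
  have hxpos : 0 < |ξ - c i₀| := abs_pos.mpr (sub_ne_zero.mpr hξ0)
  have hql : Real.sqrt (|ξ - c i₀| * D) ≤ q ξ := by
    rw [hq, habs]
    exact Real.sqrt_le_sqrt hprod
  have hqpos : 0 < q ξ :=
    lt_of_lt_of_le (Real.sqrt_pos.mpr (mul_pos hxpos hDpos)) hql
  have h1 : |ξ ^ mm / q ξ| = |ξ| ^ mm / q ξ := by
    rw [abs_div, abs_pow, abs_of_pos hqpos]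
  rw [h1]
  have h2 : |ξ| ^ mm ≤ 1 := pow_le_one₀ (abs_nonneg _) hξ
  have h3 : |ξ| ^ mm / q ξ ≤ 1 / Real.sqrt (|ξ - c i₀| * D) :=
    div_le_div₀ zero_le_one h2 (Real.sqrt_pos.mpr (mul_pos hxpos hDpos)) hql
  refine h3.trans (le_of_eq ?_)
  rw [Real.rpow_neg (abs_nonneg _), ← Real.sqrt_eq_rpow,
    Real.sqrt_mul (abs_nonneg _), one_div, mul_inv, mul_comm]

/-- integrability of a monomial over `q` on a gap between consecutive branch points. -/
lemma helper_integrable {L : ℕ} (c : Fin L → ℝ) (hmono : StrictMono c) (q : ℝ → ℝ)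
    (hq : ∀ ξ, q ξ = Real.sqrt |∏ i : Fin L, (ξ - c i)|)
    (hge : ∀ i, -1 ≤ c i) (hle : ∀ i, c i ≤ 1)
    (i₀ i₁ : Fin L) (hii : (i₁ : ℕ) = (i₀ : ℕ) + 1) (mm : ℕ) :
    IntervalIntegrable (fun ξ => ξ ^ mm / q ξ) volume (c i₀) (c i₁) := by
  classical
  set a := c i₀ with ha
  set b := c i₁ with hb
  have hab : a < b := hmono (Fin.lt_def.mpr (by omega))
  have hqc : Continuous q := by
    have : q = fun ξ => Real.sqrt |∏ i : Fin L, (ξ - c i)| := funext hq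
    rw [this]
    exact Real.continuous_sqrt.comp (continuous_abs.comp
      (continuous_finset_prod _ fun i _ => continuous_id.sub continuous_const))
  have hg : Measurable fun ξ : ℝ => ξ ^ mm / q ξ :=
    (continuous_pow mm).measurable.div hqc.measurable
  set w : ℝ := (a + b) / 2 with hw
  have haw : a < w := by rw [hw]; linarith
  have hwb : w < b := by rw [hw]; linarith
  have hxabs : ∀ ξ : ℝ, a < ξ → ξ < b → |ξ| ≤ 1 := by
    intro ξ h1 h2
    rw [abs_le]
    constructor
    · linarith [hge i₀]
    · linarith [hle i₁]
  -- left half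
  have hleft : IntervalIntegrable (fun ξ => ξ ^ mm / q ξ) volume a w := by
    set d : Fin L → ℝ := fun i => if (i : ℕ) < (i₀ : ℕ) then a - c i else (b - a) / 2 with hd
    refine helper_integrable_of_bound hg haw.le
      (helper_left_rpow ((Real.sqrt (∏ i ∈ Finset.univ.erase i₀, d i))⁻¹) a w) ?_
    intro ξ hξ
    have hbd : ∀ i, i ≠ i₀ → 0 < d i ∧ d i ≤ |ξ - c i| := by
      intro i hi
      rcases lt_or_gt_of_ne (fun h : (i : ℕ) = (i₀ : ℕ) => hi (Fin.ext h)) with h | h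
      · have hci : c i < a := hmono (Fin.lt_def.mpr h)
        constructor
        · simp only [hd, if_pos h]; linarith
        · simp only [hd, if_pos h]
          have : a - c i ≤ ξ - c i := by linarith [hξ.1]
          exact this.trans (le_abs_self _)
      · have hbi : b ≤ c i := by
          rcases eq_or_lt_of_le (show (i₁ : ℕ) ≤ (i : ℕ) by omega) with h' | h'
          · exact le_of_eq (congrArg c (Fin.ext h'))
          · exact (hmono (Fin.lt_def.mpr h')).le
        have hnl : ¬ ((i : ℕ) < (i₀ : ℕ)) := by omega
        constructor
        · simp only [hd, if_neg hnl]; linarith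
        · simp only [hd, if_neg hnl]
          have h2 : c i - ξ ≤ |ξ - c i| := by
            rw [abs_sub_comm]; exact le_abs_self _
          have : (b - a) / 2 ≤ c i - ξ := by
            have := hξ.2; rw [hw] at this; linarith
          linarith
    have := helper_key_bound c q hq i₀ d ξ (hxabs ξ hξ.1 (hξ.2.trans hwb)) (ne_of_gt hξ.1) hbd mm
    rwa [abs_of_pos (by linarith [hξ.1] : (0:ℝ) < ξ - a)] at this
  -- right half
  have hright : IntervalIntegrable (fun ξ => ξ ^ mm / q ξ) volume w b := by
    set d : Fin L → ℝ := fun i => if (i₀ : ℕ) < (i : ℕ) then c i - b else (b - a) / 2 with hd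
    refine helper_integrable_of_bound hg hwb.le
      (helper_right_rpow ((Real.sqrt (∏ i ∈ Finset.univ.erase i₁, d i))⁻¹) w b) ?_
    intro ξ hξ
    have hbd : ∀ i, i ≠ i₁ → 0 < d i ∧ d i ≤ |ξ - c i| := by
      intro i hi
      by_cases h : (i₀ : ℕ) < (i : ℕ)
      · have h' : (i₁ : ℕ) < (i : ℕ) := by
          rcases eq_or_lt_of_le (show (i₁ : ℕ) ≤ (i : ℕ) by omega) with h' | h'
          · exact absurd (Fin.ext h'.symm) hi
          · exact h'
        have hbi : b < c i := hmono (Fin.lt_def.mpr h')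
        constructor
        · simp only [hd, if_pos h]; linarith
        · simp only [hd, if_pos h]
          have h2 : c i - ξ ≤ |ξ - c i| := by
            rw [abs_sub_comm]; exact le_abs_self _
          have : c i - b ≤ c i - ξ := by linarith [hξ.2]
          linarith
      · have hci : c i ≤ a := by
          rcases eq_or_lt_of_le (show (i : ℕ) ≤ (i₀ : ℕ) by omega) with h' | h'
          · exact le_of_eq (congrArg c (Fin.ext h'))
          · exact (hmono (Fin.lt_def.mpr h')).le
        constructor
        · simp only [hd, if_neg h]; linarith
        · simp only [hd, if_neg h]
          have : (b - a) / 2 ≤ ξ - c i := by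
            have := hξ.1; rw [hw] at this; linarith
          exact this.trans (le_abs_self _)
    have := helper_key_bound c q hq i₁ d ξ (hxabs ξ (haw.trans hξ.1) hξ.2) (ne_of_lt hξ.2) hbd mm
    rwa [abs_of_neg (by linarith [hξ.2] : ξ - b < 0), neg_sub] at this
  exact hleft.trans hright


/-- If the integral of `p/qf` vanishes with `qf > 0`, `p` has a root in the open interval. -/
lemma helper_root {p qf : ℝ → ℝ} (hc : Continuous p) {a b : ℝ} (hab : a < b)
    (hqpos : ∀ x ∈ Set.Ioo a b, 0 < qf x)
    (hint : IntervalIntegrable (fun x => p x / qf x) volume a b)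
    (hz : ∫ x in a..b, p x / qf x = 0) : ∃ x ∈ Set.Ioo a b, p x = 0 := by
  by_contra hcon
  push_neg at hcon
  set x₀ : ℝ := (a + b) / 2 with hx₀def
  have hx₀ : x₀ ∈ Set.Ioo a b := ⟨by rw [hx₀def]; linarith, by rw [hx₀def]; linarith⟩
  have sign : ∀ f : ℝ → ℝ, Continuous f → (∀ x ∈ Set.Ioo a b, f x ≠ 0) →
      0 < f x₀ → ∀ x ∈ Set.Ioo a b, 0 < f x := by
    intro f hf hnz hmid x hx
    by_contra hle
    push_neg at hle
    have hlt : f x < 0 := lt_of_le_of_ne hle (hnz x hx)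
    have h0 : (0 : ℝ) ∈ Set.uIcc (f x) (f x₀) := Set.mem_uIcc.mpr (Or.inl ⟨hlt.le, hmid.le⟩)
    have him := intermediate_value_uIcc (hf.continuousOn (s := Set.uIcc x x₀))
    obtain ⟨z, hzmem, hz0⟩ := him h0
    have hzin : z ∈ Set.Ioo a b := Set.ordConnected_Ioo.uIcc_subset hx hx₀ hzmem
    exact hnz z hzin hz0
  rcases (hcon x₀ hx₀).lt_or_gt with hneg | hpos
  · have hall := sign (fun x => -p x) hc.neg
      (fun x hx => neg_ne_zero.mpr (hcon x hx)) (by simpa using hneg)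
    have hposint := intervalIntegral.intervalIntegral_pos_of_pos_on hint.neg
      (fun x hx => by
        have := hall x hx
        have hq := hqpos x hx
        show 0 < -(p x / qf x)
        exact neg_pos.mpr (div_neg_of_neg_of_pos (by simpa using this) hq)) hab
    simp only [Pi.neg_apply] at hposint
    rw [intervalIntegral.integral_neg, hz, neg_zero] at hposint
    exact lt_irrefl _ hposint
  · have hall := sign p hc hcon hpos
    have hposint := intervalIntegral.intervalIntegral_pos_of_pos_on hint
      (fun x hx => div_pos (hall x hx) (hqpos x hx)) hab
    rw [hz] at hposint
    exact lt_irrefl _ hposint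

theorem stmt_10 (n : ℕ) (hn : 2 ≤ n) (k : Fin (2 * n) → ℝ) (hmono : StrictMono k)
    (h0 : k ⟨0, by omega⟩ = -1) (h1 : k ⟨2 * n - 1, by omega⟩ = 1)
    (q : ℝ → ℝ) (hq : ∀ ξ : ℝ, q ξ = Real.sqrt |∏ i : Fin (2 * n), (ξ - k i)|)
    (M : Matrix (Fin (n - 1)) (Fin (n - 1)) ℝ)
    (hM : ∀ (m j : Fin (n - 1)),
      M m j = (-1 : ℝ) ^ ((j : ℕ) + 1) *
        ∫ ξ in (k ⟨2 * ((j : ℕ) + 1), by omega⟩)..(k ⟨2 * ((j : ℕ) + 1) + 1, by omega⟩),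
          ξ ^ (m : ℕ) / q ξ) :
    IsUnit M := by
  classical
  by_contra hunit
  have hdet : M.det = 0 := by
    by_contra h
    exact hunit (M.isUnit_iff_isUnit_det.mpr (isUnit_iff_ne_zero.mpr h))
  obtain ⟨v, hv0, hvM⟩ := Matrix.exists_vecMul_eq_zero_iff.mpr hdet
  have hge : ∀ i : Fin (2 * n), -1 ≤ k i := by
    intro i
    have h := hmono.monotone (show (⟨0, by omega⟩ : Fin (2 * n)) ≤ i from
      Fin.le_def.mpr (Nat.zero_le _))
    calc (-1 : ℝ) = k ⟨0, by omega⟩ := h0.symm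
      _ ≤ k i := h
  have hle : ∀ i : Fin (2 * n), k i ≤ 1 := by
    intro i
    have h := hmono.monotone (show i ≤ (⟨2 * n - 1, by omega⟩ : Fin (2 * n)) from
      Fin.le_def.mpr (show (i : ℕ) ≤ 2 * n - 1 by omega))
    calc k i ≤ k ⟨2 * n - 1, by omega⟩ := h
      _ = 1 := h1
  set p : ℝ → ℝ := fun ξ => ∑ m : Fin (n - 1), v m * ξ ^ (m : ℕ) with hp
  have hpc : Continuous p :=
    continuous_finset_sum _ fun m _ => continuous_const.mul (continuous_pow _)
  have key : ∀ j : Fin (n - 1),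
      ∃ x ∈ Set.Ioo (k ⟨2 * ((j : ℕ) + 1), by omega⟩) (k ⟨2 * ((j : ℕ) + 1) + 1, by omega⟩),
        p x = 0 := by
    intro j
    set i₀ : Fin (2 * n) := ⟨2 * ((j : ℕ) + 1), by omega⟩ with hi₀
    set i₁ : Fin (2 * n) := ⟨2 * ((j : ℕ) + 1) + 1, by omega⟩ with hi₁
    have hi01 : i₀ < i₁ := Fin.mk_lt_mk.mpr (by omega)
    have hab : k i₀ < k i₁ := hmono hi01
    have hint : ∀ mm : ℕ, IntervalIntegrable (fun ξ => ξ ^ mm / q ξ) volume (k i₀) (k i₁) :=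
      fun mm => helper_integrable k hmono q hq hge hle i₀ i₁ rfl mm
    have hq0 : ∀ x ∈ Set.Ioo (k i₀) (k i₁), 0 < q x := by
      intro x hx
      rw [hq]
      refine Real.sqrt_pos.mpr (abs_pos.mpr ?_)
      refine Finset.prod_ne_zero_iff.mpr fun i _ => sub_ne_zero.mpr ?_
      by_cases hcase : (i : ℕ) ≤ 2 * ((j : ℕ) + 1)
      · have hki : k i ≤ k i₀ := hmono.monotone (Fin.le_def.mpr hcase)
        exact (lt_of_le_of_lt hki hx.1).ne'
      · have hki : k i₁ ≤ k i := hmono.monotone (Fin.le_def.mpr (show 2 * ((j : ℕ) + 1) + 1 ≤ (i : ℕ) by omega))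
        exact (lt_of_lt_of_le hx.2 hki).ne
    have h := congrFun hvM j
    simp only [Matrix.vecMul, dotProduct, Pi.zero_apply] at h
    have hfactor : (-1 : ℝ) ^ ((j : ℕ) + 1) *
        (∑ m : Fin (n - 1), v m * ∫ ξ in (k i₀)..(k i₁), ξ ^ (m : ℕ) / q ξ)
        = ∑ m : Fin (n - 1), v m * M m j := by
      rw [Finset.mul_sum]
      exact Finset.sum_congr rfl fun m _ => by rw [hM m j]; ring
    have hne : ((-1 : ℝ) ^ ((j : ℕ) + 1)) ≠ 0 := pow_ne_zero _ (by norm_num)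
    have hS : ∑ m : Fin (n - 1), v m * ∫ ξ in (k i₀)..(k i₁), ξ ^ (m : ℕ) / q ξ = 0 :=
      (mul_eq_zero.mp (hfactor.trans h)).resolve_left hne
    have hexp : ∀ x : ℝ, p x / q x = ∑ m : Fin (n - 1), v m * (x ^ (m : ℕ) / q x) := by
      intro x
      rw [hp]
      simp only
      rw [Finset.sum_div]
      exact Finset.sum_congr rfl fun m _ => mul_div_assoc _ _ _
    have hsum : ∫ x in (k i₀)..(k i₁), p x / q x = 0 := by
      calc ∫ x in (k i₀)..(k i₁), p x / q x
          = ∫ x in (k i₀)..(k i₁), ∑ m : Fin (n - 1), v m * (x ^ (m : ℕ) / q x) := by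
            simp only [hexp]
        _ = ∑ m : Fin (n - 1), ∫ x in (k i₀)..(k i₁), v m * (x ^ (m : ℕ) / q x) :=
            intervalIntegral.integral_finset_sum fun m _ => (hint (m : ℕ)).const_mul (v m)
        _ = ∑ m : Fin (n - 1), v m * ∫ x in (k i₀)..(k i₁), x ^ (m : ℕ) / q x :=
            Finset.sum_congr rfl fun m _ => intervalIntegral.integral_const_mul _ _
        _ = 0 := hS
    have hintp : IntervalIntegrable (fun x => p x / q x) volume (k i₀) (k i₁) := by
      have heq : (fun x => p x / q x)
          = fun x => ∑ m : Fin (n - 1), v m * (x ^ (m : ℕ) / q x) := funext hexp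
      rw [heq]
      have hs := IntervalIntegrable.sum (μ := volume) Finset.univ
        (f := fun (m : Fin (n - 1)) (x : ℝ) => v m * (x ^ (m : ℕ) / q x))
        fun m _ => (hint (m : ℕ)).const_mul (v m)
      simpa [Finset.sum_fn] using hs
    exact helper_root hpc hab hq0 hintp hsum
  choose r hr hrz using key
  have hrmono : StrictMono r := by
    intro j j' hjj'
    have h1' : r j < k ⟨2 * ((j : ℕ) + 1) + 1, by omega⟩ := (hr j).2
    have h2' : k (⟨2 * ((j : ℕ) + 1) + 1, by omega⟩ : Fin (2 * n))
        ≤ k ⟨2 * ((j' : ℕ) + 1), by omega⟩ :=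
      hmono.monotone (Fin.le_def.mpr (show 2 * ((j : ℕ) + 1) + 1 ≤ 2 * ((j' : ℕ) + 1) from by
        have := Fin.lt_def.mp hjj'; omega))
    have h3' : k (⟨2 * ((j' : ℕ) + 1), by omega⟩ : Fin (2 * n)) < r j' := (hr j').1
    linarith
  set P : Polynomial ℝ := ∑ m : Fin (n - 1), Polynomial.C (v m) * Polynomial.X ^ (m : ℕ)
    with hP
  have hPeval : ∀ x : ℝ, P.eval x = p x := by
    intro x
    rw [hP, hp, Polynomial.eval_finset_sum]
    exact Finset.sum_congr rfl fun m _ => by simp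
  have hPdeg : P.natDegree < n - 1 := by
    have hd : P.natDegree ≤ n - 2 := by
      rw [hP]
      refine Polynomial.natDegree_sum_le_of_forall_le _ _ fun m _ => ?_
      refine le_trans (Polynomial.natDegree_C_mul_le _ _) ?_
      rw [Polynomial.natDegree_X_pow]
      have := m.isLt
      omega
    omega
  have hP0 : P = 0 := by
    refine Polynomial.eq_zero_of_natDegree_lt_card_of_eval_eq_zero P hrmono.injective
      (fun j => ?_) ?_
    · rw [hPeval]; exact hrz j
    · simpa [Fintype.card_fin] using hPdeg
  apply hv0
  funext m
  have hcoeff : P.coeff (m : ℕ) = v m := by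
    rw [hP, Polynomial.finset_sum_coeff]
    simp only [Polynomial.coeff_C_mul, Polynomial.coeff_X_pow, mul_ite, mul_one, mul_zero]
    rw [Finset.sum_eq_single m (fun b _ hb => if_neg fun h => hb (Fin.ext h.symm))
      (fun h => absurd (Finset.mem_univ m) h)]
    simp
  rw [hP0, Polynomial.coeff_zero] at hcoeff
  exact hcoeff.symm
end

section
/- Sokhotski–Plemelj jump formula on an interval: let g : [a,b] → ℝ be Hölder continuous and define Φ(ζ) = (1/(2πi)) ∫_a^b g(ξ)/(ξ−ζ) dξ for ζ ∈ ℂ ∖ [a,b]. Then for x in the open interval (a,b), the one-sided limits satisfy Φ(x+i0) − Φ(x−i0) = g(x). -/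
open Complex MeasureTheory Filter Set

lemma sp_integral_inv_sub (a b : ℝ) (ζ : ℂ) (hζ : ζ.im ≠ 0) :
    ∫ ξ in a..b, ((ξ:ℂ) - ζ)⁻¹ = Complex.log ((b:ℂ) - ζ) - Complex.log ((a:ℂ) - ζ) := by
  have hmem : ∀ t : ℝ, ((t:ℂ) - ζ) ∈ Complex.slitPlane := by
    intro t; exact Or.inr (by simp [Complex.sub_im, hζ])
  have hne : ∀ t : ℝ, ((t:ℂ) - ζ) ≠ 0 := fun t => Complex.slitPlane_ne_zero (hmem t)
  have hderiv : ∀ t ∈ Set.uIcc a b,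
      HasDerivAt (fun t : ℝ => Complex.log ((t:ℂ) - ζ)) (((t:ℂ) - ζ)⁻¹) t := by
    intro t _
    have h1 : HasDerivAt (fun t : ℝ => ((t:ℂ) - ζ)) 1 t := by
      simpa using ((hasDerivAt_id t).ofReal_comp (z := t)).sub_const ζ
    simpa [Function.comp_def] using (Complex.hasDerivAt_log (hmem t)).comp t h1
  have hcont : ContinuousOn (fun t : ℝ => ((t:ℂ) - ζ)⁻¹) (Set.uIcc a b) := by
    apply ContinuousOn.inv₀
    · exact (Complex.continuous_ofReal.sub continuous_const).continuousOn
    · intro t _; exact hne t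
  exact intervalIntegral.integral_eq_sub_of_hasDerivAt hderiv hcont.intervalIntegrable

lemma sp_holder_continuousOn {a b : ℝ} {g : ℝ → ℝ} {C α : ℝ} (hα0 : 0 < α) (hC : 0 ≤ C)
    (hHolder : ∀ x ∈ Set.Icc a b, ∀ y ∈ Set.Icc a b, |g x - g y| ≤ C * |x - y| ^ α) :
    ContinuousOn g (Set.Icc a b) := by
  intro t ht
  rw [Metric.continuousWithinAt_iff]
  intro ε hε
  refine ⟨(ε / (C + 1)) ^ α⁻¹, Real.rpow_pos_of_pos (div_pos hε (by linarith)) _, ?_⟩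
  intro y hy hdist
  have h1 : |g y - g t| ≤ C * |y - t| ^ α := hHolder y hy t ht
  have h2 : |y - t| ^ α < ((ε / (C + 1)) ^ α⁻¹) ^ α := by
    apply Real.rpow_lt_rpow (abs_nonneg _) _ hα0
    simpa [Real.dist_eq] using hdist
  have h3 : ((ε / (C + 1)) ^ α⁻¹ : ℝ) ^ α = ε / (C + 1) :=
    Real.rpow_inv_rpow (le_of_lt (div_pos hε (by linarith))) hα0.ne'
  rw [Real.dist_eq]
  have h4 : C * |y - t| ^ α ≤ C * (ε / (C + 1)) := by
    apply mul_le_mul_of_nonneg_left _ hC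
    rw [h3] at h2; exact le_of_lt h2
  have h5 : C * (ε / (C + 1)) < ε := by
    rw [mul_div_assoc']
    rw [div_lt_iff₀ (by linarith)]
    nlinarith
  calc |g y - g t| ≤ C * |y - t| ^ α := h1
    _ ≤ C * (ε / (C + 1)) := h4
    _ < ε := h5

lemma sp_bound_integrable (a b x : ℝ) (C α : ℝ) (hα0 : 0 < α) :
    IntervalIntegrable (fun ξ : ℝ => C * |ξ - x| ^ (α - 1)) volume a b := by
  have key : ∀ c d : ℝ, IntervalIntegrable (fun ξ : ℝ => |ξ - x| ^ (α - 1)) volume c d := by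
    have h1 : ∀ u : ℝ, IntervalIntegrable (fun t : ℝ => t ^ (α - 1)) volume 0 u :=
      fun u => intervalIntegral.intervalIntegrable_rpow' (by linarith)
    have hright : ∀ u : ℝ, x ≤ u → IntervalIntegrable (fun ξ : ℝ => |ξ - x| ^ (α - 1)) volume x u := by
      intro u hu
      have h2 : IntervalIntegrable (fun t : ℝ => (t - x) ^ (α - 1)) volume x u := by
        simpa using (h1 (u - x)).comp_sub_right x
      rw [intervalIntegrable_iff] at h2 ⊢
      refine h2.congr_fun ?_ measurableSet_uIoc
      intro t ht
      rw [Set.uIoc_of_le hu] at ht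
      show (t - x) ^ (α - 1) = |t - x| ^ (α - 1)
      rw [_root_.abs_of_nonneg (by linarith [ht.1.le])]
    have hleft : ∀ u : ℝ, u ≤ x → IntervalIntegrable (fun ξ : ℝ => |ξ - x| ^ (α - 1)) volume u x := by
      intro u hu
      have h2 : IntervalIntegrable (fun t : ℝ => (x - t) ^ (α - 1)) volume u x := by
        simpa using ((h1 (x - u)).comp_sub_left x).symm
      rw [intervalIntegrable_iff] at h2 ⊢
      refine h2.congr_fun ?_ measurableSet_uIoc
      intro t ht
      rw [Set.uIoc_of_le hu] at ht
      show (x - t) ^ (α - 1) = |t - x| ^ (α - 1)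
      rw [abs_sub_comm, _root_.abs_of_nonneg (by linarith [ht.2])]
    have hall : ∀ c : ℝ, IntervalIntegrable (fun ξ : ℝ => |ξ - x| ^ (α - 1)) volume x c := by
      intro c
      rcases le_total x c with h | h
      · exact hright c h
      · exact (hleft c h).symm
    intro c d
    exact ((hall c).symm.trans (hall d))
  exact (key a b).const_mul C

lemma sp_tendsto_reg_integral (a b x : ℝ) (hax : a < x) (hxb : x < b) (g : ℝ → ℝ) (C α : ℝ)
    (hα0 : 0 < α) (hC : 0 ≤ C) (hg : ContinuousOn g (Set.Icc a b))
    (hHolder : ∀ x ∈ Set.Icc a b, ∀ y ∈ Set.Icc a b, |g x - g y| ≤ C * |x - y| ^ α)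
    (s : ℝ) (hs : s ≠ 0)
    (hbd : IntervalIntegrable (fun ξ : ℝ => C * |ξ - x| ^ (α - 1)) volume a b) :
    Tendsto (fun ε : ℝ => ∫ ξ in a..b, ((g ξ : ℂ) - (g x : ℂ)) / ((ξ:ℂ) - ((x:ℂ) + Complex.I*(s*ε))))
      (nhdsWithin 0 (Set.Ioi 0))
      (nhds (∫ ξ in a..b, ((g ξ : ℂ) - (g x : ℂ)) / ((ξ:ℂ) - (x:ℂ)))) := by
  have hab : a ≤ b := le_of_lt (lt_trans hax hxb)
  have hxI : x ∈ Set.Icc a b := ⟨hax.le, hxb.le⟩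
  have hsub : Set.uIoc a b ⊆ Set.Icc a b := by
    rw [Set.uIoc_of_le hab]; exact Set.Ioc_subset_Icc_self
  apply intervalIntegral.tendsto_integral_filter_of_dominated_convergence
    (bound := fun ξ : ℝ => C * |ξ - x| ^ (α - 1))
  · -- measurability
    filter_upwards [self_mem_nhdsWithin] with ε (hε : ε ∈ Set.Ioi (0:ℝ))
    have hne : ∀ ξ : ℝ, ((ξ:ℂ) - ((x:ℂ) + Complex.I*(s*ε))) ≠ 0 := by
      intro ξ h
      have him : ((ξ:ℂ) - ((x:ℂ) + Complex.I*(s*ε))).im = -(s*ε) := by simp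
      rw [h] at him
      simp only [Complex.zero_im] at him
      exact mul_ne_zero hs (ne_of_gt (Set.mem_Ioi.1 hε)) (by linarith)
    have hcont : ContinuousOn
        (fun ξ : ℝ => ((g ξ : ℂ) - (g x : ℂ)) / ((ξ:ℂ) - ((x:ℂ) + Complex.I*(s*ε))))
        (Set.Icc a b) := by
      apply ContinuousOn.div
      · exact ((Complex.continuous_ofReal.comp_continuousOn hg).sub continuousOn_const)
      · exact ((Complex.continuous_ofReal.sub continuous_const).continuousOn)
      · intro ξ _; exact hne ξ
    exact (hcont.mono hsub).aestronglyMeasurable (measurableSet_uIoc)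
  · -- bound
    filter_upwards [self_mem_nhdsWithin] with ε (hε : ε ∈ Set.Ioi (0:ℝ))
    apply ae_of_all
    intro ξ hξ
    have hξI : ξ ∈ Set.Icc a b := hsub hξ
    by_cases hne : ξ = x
    · subst hne
      simp only [sub_self, zero_div, norm_zero]
      exact mul_nonneg hC (Real.rpow_nonneg (abs_nonneg _) _)
    · have habs : 0 < |ξ - x| := abs_pos.2 (sub_ne_zero.2 hne)
      have hnum : ‖((g ξ : ℂ) - (g x : ℂ))‖ = |g ξ - g x| := by
        rw [← Complex.ofReal_sub, Complex.norm_real, Real.norm_eq_abs]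
      have hden : |ξ - x| ≤ ‖(ξ:ℂ) - ((x:ℂ) + Complex.I*(s*ε))‖ := by
        have hre : ((ξ:ℂ) - ((x:ℂ) + Complex.I*(s*ε))).re = ξ - x := by simp
        calc |ξ - x| = |((ξ:ℂ) - ((x:ℂ) + Complex.I*(s*ε))).re| := by rw [hre]
          _ ≤ ‖(ξ:ℂ) - ((x:ℂ) + Complex.I*(s*ε))‖ := Complex.abs_re_le_norm _
          _ = ‖(ξ:ℂ) - ((x:ℂ) + Complex.I*(s*ε))‖ := rfl
      rw [norm_div, hnum]
      have hrhs : C * |ξ - x| ^ (α - 1) = (C * |ξ - x| ^ α) / |ξ - x| := by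
        rw [Real.rpow_sub habs, Real.rpow_one, mul_div_assoc]
      rw [hrhs]
      apply div_le_div₀ (by positivity) (hHolder ξ hξI x hxI) habs hden
  · exact hbd
  · -- pointwise limit
    have hx0 : ∀ᵐ ξ : ℝ ∂volume, ξ ≠ x := by
      rw [ae_iff]
      simp only [ne_eq, not_not]
      rw [show {a : ℝ | a = x} = {x} from Set.setOf_eq_eq_singleton]
      exact measure_singleton x
    filter_upwards [hx0] with ξ hξx _
    have hden0 : ((ξ:ℂ) - (x:ℂ)) ≠ 0 := by
      simpa [Complex.ext_iff, sub_eq_zero] using hξx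
    have hcont : Tendsto (fun ε : ℝ => (ξ:ℂ) - ((x:ℂ) + Complex.I*(s*ε))) (nhds 0)
        (nhds ((ξ:ℂ) - (x:ℂ))) := by
      have : Continuous (fun ε : ℝ => (ξ:ℂ) - ((x:ℂ) + Complex.I*(s*ε))) := by
        fun_prop
      have h0 := this.tendsto 0
      simpa using h0
    have := (tendsto_const_nhds (x := ((g ξ : ℂ) - (g x : ℂ)))).div hcont hden0
    exact this.mono_left nhdsWithin_le_nhds

lemma sp_side (a b : ℝ) (hab : a < b) (g : ℝ → ℝ) (C α : ℝ) (hα0 : 0 < α) (hC : 0 ≤ C)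
    (hg : ContinuousOn g (Set.Icc a b))
    (hHolder : ∀ x ∈ Set.Icc a b, ∀ y ∈ Set.Icc a b, |g x - g y| ≤ C * |x - y| ^ α)
    (Φ : ℂ → ℂ)
    (hΦ : ∀ ζ : ℂ, ζ ∉ Complex.ofReal '' Set.Icc a b →
      Φ ζ = (1 / (2 * Real.pi * Complex.I)) * ∫ ξ in a..b, (g ξ : ℂ) / ((ξ : ℂ) - ζ))
    (x : ℝ) (hax : a < x) (hxb : x < b) (s : ℝ) (hs : s ≠ 0) (w : ℂ)
    (hw : Tendsto (fun ε : ℝ => Complex.log ((a:ℂ) - ((x:ℂ) + Complex.I*(s*ε))))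
      (nhdsWithin 0 (Set.Ioi 0)) (nhds w)) :
    Tendsto (fun ε : ℝ => Φ ((x:ℂ) + Complex.I*(s*ε))) (nhdsWithin 0 (Set.Ioi 0))
      (nhds ((1/(2*Real.pi*Complex.I)) *
        ((∫ ξ in a..b, ((g ξ:ℂ) - (g x:ℂ))/((ξ:ℂ)-(x:ℂ)))
          + (g x:ℂ) * (Complex.log ((b:ℂ)-(x:ℂ)) - w)))) := by
  have him : ∀ ε : ℝ, 0 < ε → (((x:ℂ) + Complex.I*(s*ε)).im) = s * ε := by
    intro ε hε; simp
  have heq : ∀ᶠ (ε : ℝ) in nhdsWithin (0:ℝ) (Set.Ioi (0:ℝ)),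
      Φ ((x:ℂ) + Complex.I*(s*ε)) = (1/(2*Real.pi*Complex.I)) *
        ((∫ ξ in a..b, ((g ξ:ℂ) - (g x:ℂ))/((ξ:ℂ) - ((x:ℂ) + Complex.I*(s*ε))))
          + (g x:ℂ) * (Complex.log ((b:ℂ) - ((x:ℂ) + Complex.I*(s*ε)))
              - Complex.log ((a:ℂ) - ((x:ℂ) + Complex.I*(s*ε))))) := by
    filter_upwards [self_mem_nhdsWithin] with ε (hε : ε ∈ Set.Ioi (0:ℝ))
    have hε' : 0 < ε := hε
    set ζ : ℂ := (x:ℂ) + Complex.I*(s*ε) with hζdef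
    have hζim : ζ.im = s * ε := him ε hε'
    have hζim' : ζ.im ≠ 0 := by
      rw [hζim]; exact mul_ne_zero hs (ne_of_gt hε')
    have hnotmem : ζ ∉ Complex.ofReal '' Set.Icc a b := by
      rintro ⟨t, -, ht⟩
      apply hζim'
      rw [← ht]
      simp
    have hne : ∀ ξ : ℝ, ((ξ:ℂ) - ζ) ≠ 0 := by
      intro ξ h
      apply hζim'
      have : ((ξ:ℂ) - ζ).im = -ζ.im := by simp
      rw [h] at this; simp at this; rw [← this]
    rw [hΦ ζ hnotmem]
    congr 1
    have hi1 : IntervalIntegrable (fun ξ : ℝ => ((g ξ:ℂ) - (g x:ℂ))/((ξ:ℂ) - ζ)) volume a b := by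
      apply ContinuousOn.intervalIntegrable
      apply ContinuousOn.div
      · exact ((Complex.continuous_ofReal.comp_continuousOn (hg.mono (by
          rw [Set.uIcc_of_le hab.le]))).sub continuousOn_const)
      · exact (Complex.continuous_ofReal.sub continuous_const).continuousOn
      · intro ξ _; exact hne ξ
    have hi2 : IntervalIntegrable (fun ξ : ℝ => (g x:ℂ) * ((ξ:ℂ) - ζ)⁻¹) volume a b := by
      apply ContinuousOn.intervalIntegrable
      apply ContinuousOn.mul continuousOn_const
      apply ContinuousOn.inv₀ (Complex.continuous_ofReal.sub continuous_const).continuousOn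
      intro ξ _; exact hne ξ
    have hsplit : (∫ ξ in a..b, (g ξ : ℂ) / ((ξ : ℂ) - ζ))
        = (∫ ξ in a..b, (((g ξ:ℂ) - (g x:ℂ))/((ξ:ℂ) - ζ) + (g x:ℂ) * ((ξ:ℂ) - ζ)⁻¹)) := by
      apply intervalIntegral.integral_congr
      intro ξ _
      field_simp
      ring
    rw [hsplit, intervalIntegral.integral_add hi1 hi2, intervalIntegral.integral_const_mul,
      sp_integral_inv_sub a b ζ hζim']
  refine Tendsto.congr' (heq.mono fun ε h => h.symm) ?_
  apply Tendsto.const_mul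
  apply Tendsto.add
  · exact sp_tendsto_reg_integral a b x hax hxb g C α hα0 hC hg hHolder s hs
      (sp_bound_integrable a b x C α hα0)
  · apply Tendsto.const_mul
    apply Tendsto.sub _ hw
    have hcont : Continuous (fun ε : ℝ => (b:ℂ) - ((x:ℂ) + Complex.I*(s*ε))) := by continuity
    have hmap : Tendsto (fun ε : ℝ => (b:ℂ) - ((x:ℂ) + Complex.I*(s*ε)))
        (nhdsWithin 0 (Set.Ioi 0)) (nhds ((b:ℂ) - (x:ℂ))) := by
      have h2 : Tendsto (fun ε : ℝ => (b:ℂ) - ((x:ℂ) + Complex.I*(s*ε))) (nhds 0)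
          (nhds ((b:ℂ) - (x:ℂ))) := by simpa using hcont.tendsto 0
      exact h2.mono_left nhdsWithin_le_nhds
    refine hmap.clog (Or.inl ?_)
    simp only [Complex.sub_re, Complex.ofReal_re]
    linarith

/-- Sokhotski–Plemelj jump formula on an interval. -/
theorem stmt_12 (a b : ℝ) (hab : a < b) (g : ℝ → ℝ)
    (C α : ℝ) (hα0 : 0 < α) (hα1 : α ≤ 1)
    (hHolder : ∀ x ∈ Set.Icc a b, ∀ y ∈ Set.Icc a b, |g x - g y| ≤ C * |x - y| ^ α)
    (Φ : ℂ → ℂ)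
    (hΦ : ∀ ζ : ℂ, ζ ∉ Complex.ofReal '' Set.Icc a b →
      Φ ζ = (1 / (2 * Real.pi * Complex.I)) * ∫ ξ in a..b, (g ξ : ℂ) / ((ξ : ℂ) - ζ)) :
    ∀ x ∈ Set.Ioo a b,
      ∃ Φp Φm : ℂ,
        Tendsto (fun ε : ℝ => Φ ((x : ℂ) + Complex.I * ε)) (nhdsWithin 0 (Set.Ioi 0)) (nhds Φp) ∧
        Tendsto (fun ε : ℝ => Φ ((x : ℂ) - Complex.I * ε)) (nhdsWithin 0 (Set.Ioi 0)) (nhds Φm) ∧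
        Φp - Φm = (g x : ℂ) := by
  have hC : 0 ≤ C := by
    have h := hHolder a ⟨le_refl a, hab.le⟩ b ⟨hab.le, le_refl b⟩
    have h2 : (0:ℝ) < |a - b| ^ α :=
      Real.rpow_pos_of_pos (abs_pos.2 (sub_ne_zero.2 hab.ne)) α
    nlinarith [abs_nonneg (g a - g b)]
  have hg : ContinuousOn g (Set.Icc a b) := sp_holder_continuousOn hα0 hC hHolder
  intro x hx
  obtain ⟨hax, hxb⟩ := hx
  set J : ℂ := ∫ ξ in a..b, ((g ξ:ℂ) - (g x:ℂ))/((ξ:ℂ)-(x:ℂ)) with hJ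
  set Lb : ℂ := Complex.log ((b:ℂ)-(x:ℂ)) with hLb
  set M : ℂ := (Real.log (x - a) : ℂ) with hM
  have hzre : ((a:ℂ) - (x:ℂ)).re < 0 := by
    simp only [Complex.sub_re, Complex.ofReal_re]; linarith
  have hzim : ((a:ℂ) - (x:ℂ)).im = 0 := by simp
  have habsz : ‖(a:ℂ) - (x:ℂ)‖ = x - a := by
    rw [← Complex.ofReal_sub, Complex.norm_real, Real.norm_eq_abs, abs_sub_comm,
      _root_.abs_of_nonneg (by linarith)]
  -- plus side
  have hmapP : Tendsto (fun ε : ℝ => (a:ℂ) - ((x:ℂ) + Complex.I*(((1:ℝ)):ℂ)*(ε:ℂ)))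
      (nhdsWithin 0 (Set.Ioi 0)) (nhdsWithin ((a:ℂ) - (x:ℂ)) {z : ℂ | z.im < 0}) := by
    rw [tendsto_nhdsWithin_iff]
    constructor
    · have hcont : Continuous (fun ε : ℝ => (a:ℂ) - ((x:ℂ) + Complex.I*(((1:ℝ)):ℂ)*(ε:ℂ))) := by
        fun_prop
      have h2 : Tendsto (fun ε : ℝ => (a:ℂ) - ((x:ℂ) + Complex.I*(((1:ℝ)):ℂ)*(ε:ℂ))) (nhds 0)
          (nhds ((a:ℂ) - (x:ℂ))) := by simpa using hcont.tendsto 0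
      exact h2.mono_left nhdsWithin_le_nhds
    · filter_upwards [self_mem_nhdsWithin] with ε (hε : ε ∈ Set.Ioi (0:ℝ))
      have hε' : (0:ℝ) < ε := hε
      simp only [Set.mem_setOf_eq, Complex.sub_im, Complex.add_im, Complex.ofReal_im,
        Complex.mul_im, Complex.mul_re, Complex.I_re, Complex.I_im, Complex.ofReal_re,
        Complex.one_re, Complex.one_im]
      nlinarith
  have hwP : Tendsto (fun ε : ℝ => Complex.log ((a:ℂ) - ((x:ℂ) + Complex.I*(((1:ℝ)*ε : ℝ):ℂ))))
      (nhdsWithin 0 (Set.Ioi 0)) (nhds (M - Real.pi * Complex.I)) := by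
    have hlog := Complex.tendsto_log_nhdsWithin_im_neg_of_re_neg_of_im_zero hzre hzim
    rw [habsz] at hlog
    have h3 := hlog.comp hmapP
    refine h3.congr fun ε => ?_
    simp only [Function.comp_apply]
    congr 2
    push_cast
    ring
  have hwM : Tendsto (fun ε : ℝ => Complex.log ((a:ℂ) - ((x:ℂ) + Complex.I*(((-1:ℝ)*ε : ℝ):ℂ))))
      (nhdsWithin 0 (Set.Ioi 0)) (nhds (M + Real.pi * Complex.I)) := by
    have hmapM : Tendsto (fun ε : ℝ => (a:ℂ) - ((x:ℂ) + Complex.I*(((-1:ℝ)*ε : ℝ):ℂ)))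
        (nhdsWithin 0 (Set.Ioi 0)) (nhdsWithin ((a:ℂ) - (x:ℂ)) {z : ℂ | 0 ≤ z.im}) := by
      rw [tendsto_nhdsWithin_iff]
      constructor
      · have hcont : Continuous (fun ε : ℝ => (a:ℂ) - ((x:ℂ) + Complex.I*(((-1:ℝ)*ε : ℝ):ℂ))) := by
          fun_prop
        have h2 : Tendsto (fun ε : ℝ => (a:ℂ) - ((x:ℂ) + Complex.I*(((-1:ℝ)*ε : ℝ):ℂ))) (nhds 0)
            (nhds ((a:ℂ) - (x:ℂ))) := by simpa using hcont.tendsto 0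
        exact h2.mono_left nhdsWithin_le_nhds
      · filter_upwards [self_mem_nhdsWithin] with ε (hε : ε ∈ Set.Ioi (0:ℝ))
        have hε' : (0:ℝ) < ε := hε
        simp only [Set.mem_setOf_eq, Complex.sub_im, Complex.add_im, Complex.ofReal_im,
          Complex.mul_im, Complex.mul_re, Complex.I_re, Complex.I_im, Complex.ofReal_re]
        push_cast
        nlinarith
    have hlog := Complex.tendsto_log_nhdsWithin_im_nonneg_of_re_neg_of_im_zero hzre hzim
    rw [habsz] at hlog
    have h3 := hlog.comp hmapM
    refine h3.congr fun ε => ?_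
    simp only [Function.comp_apply]
  have hP := sp_side a b hab g C α hα0 hC hg hHolder Φ hΦ x hax hxb 1 one_ne_zero
    (M - Real.pi * Complex.I) (by
      refine hwP.congr fun ε => ?_
      norm_num)
  have hMside := sp_side a b hab g C α hα0 hC hg hHolder Φ hΦ x hax hxb (-1)
    (by norm_num) (M + Real.pi * Complex.I) (by
      refine hwM.congr fun ε => ?_
      push_cast
      ring_nf)
  refine ⟨(1/(2*Real.pi*Complex.I)) * (J + (g x:ℂ) * (Lb - (M - Real.pi * Complex.I))),
    (1/(2*Real.pi*Complex.I)) * (J + (g x:ℂ) * (Lb - (M + Real.pi * Complex.I))), ?_, ?_, ?_⟩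
  · refine hP.congr fun ε => ?_
    norm_num
  · refine hMside.congr fun ε => ?_
    congr 1
    push_cast
    ring
  · have hπ : (Real.pi : ℂ) ≠ 0 := Complex.ofReal_ne_zero.2 Real.pi_ne_zero
    have hI : Complex.I ≠ 0 := Complex.I_ne_zero
    field_simp
    ring
end

section
/- With δ = (2κ₀τ^∞ − (κ₀+1)τ)/((1−κ₀)·conj(τ)) (κ₀ ≠ 1, τ ≠ 0 complex), the solution of the system γ₀' = (β₀−d₀')μ₀/(1−κ₀), γ₋₁' + γ₁' = 2β₁''μ₀/(1−κ₀), γ₋₁'' − γ₁'' = 2β₁'μ₀/(1−κ₀), together with the matching conditions γ₁ = conj(τ)c₋₁ and β₁ = ((conj(τ^∞)−conj(τ))/μ)·i·c₋₁ (c₋₁ real, κ₀ = μ₀/μ), yields γ₋₁ = conj(τ)·c₋₁·δ; i.e., the coefficient of 1/ζ in conj(τ)ω(ζ) equals conj(τ)c₋₁δ. -/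
open Complex

theorem stmt_16 (τ τinf : ℂ) (hτ : τ ≠ 0) (hτinf : τinf ≠ 0)
    (μ μ₀ : ℝ) (hμ : 0 < μ) (hμ₀ : 0 < μ₀)
    (κ₀ : ℝ) (hκ : κ₀ = μ₀ / μ) (hκ1 : κ₀ ≠ 1)
    (cm1 β₀ d₀' γ₀' : ℝ) (β₁ γm1 γ₁ : ℂ)
    (h0 : γ₀' = (β₀ - d₀') * μ₀ / (1 - κ₀))
    (h1 : γm1.re + γ₁.re = 2 * β₁.im * μ₀ / (1 - κ₀))
    (h2 : γm1.im - γ₁.im = 2 * β₁.re * μ₀ / (1 - κ₀))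
    (h3 : γ₁ = starRingEnd ℂ τ * (cm1 : ℂ))
    (h4 : β₁ = ((starRingEnd ℂ τinf - starRingEnd ℂ τ) / (μ : ℂ)) * Complex.I * (cm1 : ℂ)) :
    γm1 = starRingEnd ℂ τ * (cm1 : ℂ) *
      ((2 * (κ₀ : ℂ) * τinf - ((κ₀ : ℂ) + 1) * τ) / ((1 - (κ₀ : ℂ)) * starRingEnd ℂ τ)) := by
  have hμ' : (μ : ℝ) ≠ 0 := ne_of_gt hμ
  have hμ₀' : μ₀ = κ₀ * μ := by rw [hκ]; field_simp
  have hk : (1 : ℝ) - κ₀ ≠ 0 := sub_ne_zero.mpr (Ne.symm hκ1)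
  have hkc : (1 : ℂ) - (κ₀ : ℂ) ≠ 0 := by
    simpa using (Complex.ofReal_ne_zero.mpr hk)
  have hτc : starRingEnd ℂ τ ≠ 0 := by simpa using hτ
  have hmm : μ * μ ≠ 0 := mul_ne_zero hμ' hμ'
  have hrhs : starRingEnd ℂ τ * (cm1 : ℂ) *
      ((2 * (κ₀ : ℂ) * τinf - ((κ₀ : ℂ) + 1) * τ) / ((1 - (κ₀ : ℂ)) * starRingEnd ℂ τ))
      = (cm1 : ℂ) * (2 * (κ₀ : ℂ) * τinf - ((κ₀ : ℂ) + 1) * τ) / (1 - (κ₀ : ℂ)) := by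
    field_simp
  rw [hrhs, eq_div_iff hkc]
  subst h3 h4 hμ₀'
  rw [eq_div_iff hk] at h1 h2
  apply Complex.ext
  · simp [Complex.mul_re, Complex.mul_im, Complex.div_re, Complex.div_im,
      Complex.normSq] at h1 h2 ⊢
    field_simp at h1 h2
    have h1' : (γm1.re + τ.re * cm1) * (1 - κ₀) = 2 * (τinf.re - τ.re) * cm1 * κ₀ := by
      apply mul_right_cancel₀ hmm
      linear_combination (μ * μ) * h1
    linear_combination h1'
  · simp [Complex.mul_re, Complex.mul_im, Complex.div_re, Complex.div_im,
      Complex.normSq] at h1 h2 ⊢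
    field_simp at h1 h2
    have h2' : (γm1.im + τ.im * cm1) * (1 - κ₀) = 2 * (τinf.im - τ.im) * cm1 * κ₀ := by
      apply mul_right_cancel₀ hmm
      linear_combination (μ * μ) * h2
    linear_combination h2'
end
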